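/- There exists a constant c > 0 such that for every L ≥ 1, every α ∈ (0,1] and every t ≥ 0, the birth-and-death chain with parameters L and α satisfies P^t(0,0) = P^t(L,L) and |P^t(0,0) − 1/2 − (1/2)·(1 − 2α/L)^t| ≤ c·L·α. -/

import Mathlib

open MeasureTheory Filter Topology

/-- Transition probabilities of the birth-and-death chain on `{0,…,L}` with parameter `α`:
`P(0,1) = P(L,L−1) = α`, `P(0,0) = P(L,L) = 1−α`, and `P(i,i+1) = P(i,i−1) = 1/2` for
`0 < i < L`. -/
noncomputable def bdKernel (L : ℕ) (α : ℝ) (i j : ℕ) : ℝ :=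
  if i = 0 then (if j = 1 then α else if j = 0 then 1 - α else 0)
  else if i = L then (if j = L - 1 then α else if j = L then 1 - α else 0)
  else if i < L then (if j = i + 1 ∨ j = i - 1 then 1 / 2 else 0)
  else 0

/-- `bdDist L α x t j = P^t(x, j)`, the probability that the birth-and-death chain started at
`x` is at state `j` at time `t`. -/
noncomputable def bdDist (L : ℕ) (α : ℝ) (x : ℕ) : ℕ → ℕ → ℝ
  | 0 => fun j => if j = x then 1 else 0
  | t + 1 => fun j => ∑ i ∈ Finset.range (L + 1), bdDist L α x t i * bdKernel L α i j

/-- Total variation distance between two distributions on the state space `{0,…,L}`. -/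
noncomputable def bdTV (L : ℕ) (μ ν : ℕ → ℝ) : ℝ :=
  ⨆ A : Set ℕ,
    |∑ i ∈ Finset.range (L + 1), Set.indicator A μ i -
      ∑ i ∈ Finset.range (L + 1), Set.indicator A ν i|

open Classical in
/-- `bdStay L α T x A = P(X_t ∈ A_t for all 0 ≤ t ≤ T | X_0 = x)` for the birth-and-death
chain with parameters `L` and `α`. -/
noncomputable def bdStay (L : ℕ) (α : ℝ) (T : ℕ) (x : ℕ) (A : ℕ → Set ℕ) : ℝ :=
  ∑ p : Fin (T + 1) → Fin (L + 1),
    if (p 0 : ℕ) = x ∧ ∀ t : Fin (T + 1), (p t : ℕ) ∈ A (t : ℕ) then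
      ∏ i : Fin T, bdKernel L α (p i.castSucc) (p i.succ) else 0

/-- The separation `S^A_T(0,L)` of a separating sequence `A` for the birth-and-death chain. -/
noncomputable def bdSep (L : ℕ) (α : ℝ) (T : ℕ) (A : ℕ → Set ℕ) : ℝ :=
  bdStay L α T 0 A + bdStay L α T L (fun t => (A t)ᶜ)

lemma ker_nonneg (L : ℕ) (α : ℝ) (h0 : 0 ≤ α) (h1 : α ≤ 1) (i j : ℕ) :
    0 ≤ bdKernel L α i j := by
  unfold bdKernel; split_ifs <;> linarith

lemma ker_symm (L : ℕ) (α : ℝ) (i j : ℕ) (hi : i ≤ L) (hj : j ≤ L) :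
    bdKernel L α (L - i) (L - j) = bdKernel L α i j := by
  unfold bdKernel
  split_ifs <;> first | rfl | omega

lemma ker_split (L : ℕ) (hL : 1 ≤ L) (α : ℝ) (i : ℕ) (hi : i ≤ L) (g : ℕ → ℝ) :
    ∑ j ∈ Finset.range (L+1), bdKernel L α i j * g j =
      if i = 0 then α * g 1 + (1-α) * g 0
      else if i = L then α * g (L-1) + (1-α) * g L
      else (1/2) * g (i+1) + (1/2) * g (i-1) := by
  by_cases h0 : i = 0
  · have key : ∀ j, bdKernel L α i j * g j =
        (if j = 1 then α * g 1 else 0) + (if j = 0 then (1-α) * g 0 else 0) := by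
      intro j; unfold bdKernel; split_ifs <;> subst_vars <;> first | ring1 | omega
    have m1 : (1:ℕ) ∈ Finset.range (L+1) := by simp; omega
    have m0 : (0:ℕ) ∈ Finset.range (L+1) := by simp
    rw [Finset.sum_congr rfl (fun j _ => key j), Finset.sum_add_distrib,
      Finset.sum_ite_eq' (Finset.range (L+1)), Finset.sum_ite_eq' (Finset.range (L+1)),
      if_pos m1, if_pos m0, if_pos h0]
  · by_cases hiL : i = L
    · have key : ∀ j, bdKernel L α i j * g j =
          (if j = L-1 then α * g (L-1) else 0) + (if j = L then (1-α) * g L else 0) := by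
        intro j; unfold bdKernel; split_ifs <;> subst_vars <;> first | ring1 | omega
      have m1 : L - 1 ∈ Finset.range (L+1) := by simp
      have m0 : L ∈ Finset.range (L+1) := by simp
      rw [Finset.sum_congr rfl (fun j _ => key j), Finset.sum_add_distrib,
        Finset.sum_ite_eq' (Finset.range (L+1)), Finset.sum_ite_eq' (Finset.range (L+1)),
        if_pos m1, if_pos m0, if_neg h0, if_pos hiL]
    · have hlt : i < L := lt_of_le_of_ne hi hiL
      have key : ∀ j, bdKernel L α i j * g j =
          (if j = i+1 then (1/2) * g (i+1) else 0) + (if j = i-1 then (1/2) * g (i-1) else 0) := by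
        intro j; unfold bdKernel; split_ifs <;> subst_vars <;> first | ring1 | omega
      have m1 : i + 1 ∈ Finset.range (L+1) := by simp; omega
      have m0 : i - 1 ∈ Finset.range (L+1) := by simp; omega
      rw [Finset.sum_congr rfl (fun j _ => key j), Finset.sum_add_distrib,
        Finset.sum_ite_eq' (Finset.range (L+1)), Finset.sum_ite_eq' (Finset.range (L+1)),
        if_pos m1, if_pos m0, if_neg h0, if_neg hiL]

lemma ker_sum (L : ℕ) (hL : 1 ≤ L) (α : ℝ) (i : ℕ) (hi : i ≤ L) :
    ∑ j ∈ Finset.range (L+1), bdKernel L α i j = 1 := by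
  have h := ker_split L hL α i hi (fun _ => 1)
  simp only [mul_one] at h
  rw [h]; split_ifs <;> ring

lemma ker_col (L : ℕ) (α : ℝ) (i : ℕ) (h0 : 0 < i) (hiL : i < L) (i' : ℕ) (hi' : i' ≤ L) :
    bdKernel L α i' i =
      (if i' = i - 1 then (if i = 1 then α else 1/2) else 0)
      + (if i' = i + 1 then (if i + 1 = L then α else 1/2) else 0) := by
  unfold bdKernel; split_ifs <;> subst_vars <;> first | ring1 | omega

lemma dist_nonneg' (L : ℕ) (α : ℝ) (h0 : 0 ≤ α) (h1 : α ≤ 1) (x : ℕ) :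
    ∀ t j, 0 ≤ bdDist L α x t j := by
  intro t
  induction t with
  | zero => intro j; simp only [bdDist]; split_ifs <;> norm_num
  | succ t ih =>
    intro j
    simp only [bdDist]
    exact Finset.sum_nonneg fun i _ => mul_nonneg (ih i) (ker_nonneg L α h0 h1 i j)

lemma dist_sum (L : ℕ) (hL : 1 ≤ L) (α : ℝ) (x : ℕ) (hx : x ≤ L) :
    ∀ t, ∑ j ∈ Finset.range (L+1), bdDist L α x t j = 1 := by
  intro t
  induction t with
  | zero =>
    simp only [bdDist]
    rw [Finset.sum_ite_eq' (Finset.range (L+1))]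
    simp [Nat.lt_succ_iff, hx]
  | succ t ih =>
    simp only [bdDist]
    rw [Finset.sum_comm]
    calc ∑ i ∈ Finset.range (L+1), ∑ j ∈ Finset.range (L+1), bdDist L α x t i * bdKernel L α i j
        = ∑ i ∈ Finset.range (L+1), bdDist L α x t i := by
          refine Finset.sum_congr rfl fun i hi => ?_
          rw [← Finset.mul_sum, ker_sum L hL α i (by simpa [Nat.lt_succ_iff] using hi), mul_one]
      _ = 1 := ih

lemma dist_le_one (L : ℕ) (hL : 1 ≤ L) (α : ℝ) (h0 : 0 ≤ α) (h1 : α ≤ 1)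
    (x : ℕ) (hx : x ≤ L) (t j : ℕ) (hj : j ≤ L) : bdDist L α x t j ≤ 1 := by
  have := dist_sum L hL α x hx t
  calc bdDist L α x t j ≤ ∑ j' ∈ Finset.range (L+1), bdDist L α x t j' :=
        Finset.single_le_sum (fun i _ => dist_nonneg' L α h0 h1 x t i)
          (by simp [Nat.lt_succ_iff, hj])
    _ = 1 := this

lemma interior_bound (L : ℕ) (hL : 1 ≤ L) (α : ℝ) (h0 : 0 < α) (h1 : α ≤ 1) :
    ∀ t i, 0 < i → i < L → bdDist L α 0 t i ≤ 2 * α := by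
  intro t
  induction t with
  | zero =>
    intro i hi0 hiL
    simp only [bdDist]
    rw [if_neg (by omega)]
    positivity
  | succ t ih =>
    intro i hi0 hiL
    simp only [bdDist]
    have key : ∀ i' ∈ Finset.range (L+1), bdDist L α 0 t i' * bdKernel L α i' i =
        (if i' = i - 1 then bdDist L α 0 t i' * (if i = 1 then α else 1/2) else 0)
        + (if i' = i + 1 then bdDist L α 0 t i' * (if i + 1 = L then α else 1/2) else 0) := by
      intro i' hi'
      rw [ker_col L α i hi0 hiL i' (by simpa [Nat.lt_succ_iff] using hi')]
      split_ifs <;> ring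
    rw [Finset.sum_congr rfl key, Finset.sum_add_distrib,
      Finset.sum_ite_eq' (Finset.range (L+1)), Finset.sum_ite_eq' (Finset.range (L+1)),
      if_pos (by simp; omega : i - 1 ∈ Finset.range (L+1)),
      if_pos (by simp; omega : i + 1 ∈ Finset.range (L+1))]
    have hterm1 : bdDist L α 0 t (i-1) * (if i = 1 then α else 1/2) ≤ α := by
      split_ifs with h
      · have := dist_le_one L hL α h0.le h1 0 (by omega) t (i-1) (by omega)
        nlinarith [dist_nonneg' L α h0.le h1 0 t (i-1)]
      · have := ih (i-1) (by omega) (by omega)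
        nlinarith [dist_nonneg' L α h0.le h1 0 t (i-1)]
    have hterm2 : bdDist L α 0 t (i+1) * (if i + 1 = L then α else 1/2) ≤ α := by
      split_ifs with h
      · have := dist_le_one L hL α h0.le h1 0 (by omega) t (i+1) (by omega)
        nlinarith [dist_nonneg' L α h0.le h1 0 t (i+1)]
      · have := ih (i+1) (by omega) (by omega)
        nlinarith [dist_nonneg' L α h0.le h1 0 t (i+1)]
    linarith

lemma ker_f (L : ℕ) (hL : 1 ≤ L) (α : ℝ) (i : ℕ) (hi : i ≤ L) :
    ∑ j ∈ Finset.range (L+1), bdKernel L α i j * (1 - 2*(j:ℝ)/L) =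
      (1 - 2*(i:ℝ)/L) - (2*α/L) * ((if i = 0 then (1:ℝ) else 0) - (if i = L then (1:ℝ) else 0)) := by
  have hL0 : (L:ℝ) ≠ 0 := by positivity
  rw [ker_split L hL α i hi (fun j => 1 - 2*(j:ℝ)/L)]
  by_cases h0 : i = 0
  · subst h0
    rw [if_pos rfl, if_pos rfl, if_neg (by omega)]
    push_cast
    field_simp
    ring
  · by_cases hiL : i = L
    · subst hiL
      rw [if_neg h0, if_neg h0, if_pos rfl, if_pos rfl]
      have hc : ((i - 1 : ℕ) : ℝ) = (i:ℝ) - 1 := by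
        have : 1 ≤ i := by omega
        push_cast [this]; ring
      rw [hc]
      field_simp
      ring
    · rw [if_neg h0, if_neg h0, if_neg hiL, if_neg hiL]
      have hc : ((i - 1 : ℕ) : ℝ) = (i:ℝ) - 1 := by
        have : 1 ≤ i := by omega
        push_cast [this]; ring
      rw [hc]
      push_cast
      field_simp
      ring

lemma M_rec (L : ℕ) (hL : 1 ≤ L) (α : ℝ) (t : ℕ) :
    ∑ j ∈ Finset.range (L+1), bdDist L α 0 (t+1) j * (1 - 2*(j:ℝ)/L) =
      (∑ j ∈ Finset.range (L+1), bdDist L α 0 t j * (1 - 2*(j:ℝ)/L))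
      - (2*α/L) * (bdDist L α 0 t 0 - bdDist L α 0 t L) := by
  simp only [bdDist]
  rw [show ∀ S : Finset ℕ, ∑ j ∈ S, (∑ i ∈ Finset.range (L+1), bdDist L α 0 t i * bdKernel L α i j) * (1 - 2*(j:ℝ)/L)
      = ∑ i ∈ Finset.range (L+1), ∑ j ∈ S, bdDist L α 0 t i * (bdKernel L α i j * (1 - 2*(j:ℝ)/L))
      from fun S => by rw [Finset.sum_comm]; exact Finset.sum_congr rfl fun j _ => by rw [Finset.sum_mul]; exact Finset.sum_congr rfl fun i _ => by ring]
  have step : ∀ i ∈ Finset.range (L+1),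
      ∑ j ∈ Finset.range (L+1), bdDist L α 0 t i * (bdKernel L α i j * (1 - 2*(j:ℝ)/L))
      = bdDist L α 0 t i * (1 - 2*(i:ℝ)/L)
        - (2*α/L) * (bdDist L α 0 t i * ((if i = 0 then (1:ℝ) else 0) - (if i = L then (1:ℝ) else 0))) := by
    intro i hi
    rw [← Finset.mul_sum, ker_f L hL α i (by simpa [Nat.lt_succ_iff] using hi)]
    ring
  rw [Finset.sum_congr rfl step, Finset.sum_sub_distrib, ← Finset.mul_sum]
  congr 1
  congr 1
  have expand : ∀ i, bdDist L α 0 t i * ((if i = 0 then (1:ℝ) else 0) - (if i = L then (1:ℝ) else 0))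
      = (if i = 0 then bdDist L α 0 t i else 0) - (if i = L then bdDist L α 0 t i else 0) := by
    intro i; split_ifs <;> ring
  rw [Finset.sum_congr rfl (fun i _ => expand i), Finset.sum_sub_distrib,
    Finset.sum_ite_eq' (Finset.range (L+1)), Finset.sum_ite_eq' (Finset.range (L+1)),
    if_pos (by simp : (0:ℕ) ∈ Finset.range (L+1)), if_pos (by simp : L ∈ Finset.range (L+1))]

lemma dist_symm (L : ℕ) (hL : 1 ≤ L) (α : ℝ) :
    ∀ t j, j ≤ L → bdDist L α L t j = bdDist L α 0 t (L - j) := by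
  intro t
  induction t with
  | zero =>
    intro j hj
    simp only [bdDist]
    split_ifs <;> first | rfl | omega
  | succ t ih =>
    intro j hj
    show ∑ i ∈ Finset.range (L+1), bdDist L α L t i * bdKernel L α i j
       = ∑ i ∈ Finset.range (L+1), bdDist L α 0 t i * bdKernel L α i (L - j)
    rw [Finset.sum_congr rfl (fun i hi => by
      rw [ih i (by simpa [Nat.lt_succ_iff] using hi)])]
    rw [← Finset.sum_range_reflect]
    refine Finset.sum_congr rfl fun i hi => ?_
    have hiL : i ≤ L := by simpa [Nat.lt_succ_iff] using hi
    have h1 : L + 1 - 1 - i = L - i := by omega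
    have h2 : L - (L - i) = i := by omega
    rw [h1, h2]
    have := ker_symm L α i (L - j) hiL (by omega)
    rw [show L - (L - j) = j from by omega] at this
    rw [this]

lemma split3 (L : ℕ) (hL : 1 ≤ L) (g : ℕ → ℝ) :
    ∑ j ∈ Finset.range (L+1), g j =
      g 0 + g L + ∑ j ∈ ((Finset.range (L+1)).erase 0).erase L, g j := by
  have h0 : (0:ℕ) ∈ Finset.range (L+1) := by simp
  have hLm : L ∈ (Finset.range (L+1)).erase 0 := by
    simp [Finset.mem_erase]; omega
  rw [← Finset.add_sum_erase _ g h0, ← Finset.add_sum_erase _ g hLm]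
  ring

lemma mem_S (L : ℕ) (j : ℕ) (hj : j ∈ ((Finset.range (L+1)).erase 0).erase L) :
    0 < j ∧ j < L := by
  simp [Finset.mem_erase, Nat.lt_succ_iff] at hj
  omega

lemma card_S (L : ℕ) (hL : 1 ≤ L) :
    (((Finset.range (L+1)).erase 0).erase L).card = L - 1 := by
  rw [Finset.card_erase_of_mem (by simp [Finset.mem_erase]; omega),
    Finset.card_erase_of_mem (by simp), Finset.card_range]
  omega

lemma interior_sum_bound (L : ℕ) (hL : 1 ≤ L) (α : ℝ) (h0 : 0 < α) (h1 : α ≤ 1) (t : ℕ) :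
    ∑ j ∈ ((Finset.range (L+1)).erase 0).erase L, bdDist L α 0 t j ≤ 2 * α * L := by
  calc ∑ j ∈ ((Finset.range (L+1)).erase 0).erase L, bdDist L α 0 t j
      ≤ ∑ _j ∈ ((Finset.range (L+1)).erase 0).erase L, 2*α := by
        refine Finset.sum_le_sum fun j hj => ?_
        obtain ⟨hj0, hjL⟩ := mem_S L j hj
        exact interior_bound L hL α h0 h1 t j hj0 hjL
    _ = ((L:ℝ) - 1) * (2*α) := by
        rw [Finset.sum_const, card_S L hL, nsmul_eq_mul]
        congr 1
        push_cast [hL]; ring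
    _ ≤ 2 * α * L := by nlinarith

lemma M_minus_u (L : ℕ) (hL : 1 ≤ L) (α : ℝ) (h0 : 0 < α) (h1 : α ≤ 1) (t : ℕ) :
    |(∑ j ∈ Finset.range (L+1), bdDist L α 0 t j * (1 - 2*(j:ℝ)/L))
      - (bdDist L α 0 t 0 - bdDist L α 0 t L)| ≤ 2 * α * L := by
  have hL0 : (L:ℝ) ≠ 0 := by positivity
  have hsplit := split3 L hL (fun j => bdDist L α 0 t j * (1 - 2*(j:ℝ)/L))
  have f0 : (1 - 2*((0:ℕ):ℝ)/L) = 1 := by norm_num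
  have fL : (1 - 2*((L:ℕ):ℝ)/L) = -1 := by field_simp; norm_num
  have key : (∑ j ∈ Finset.range (L+1), bdDist L α 0 t j * (1 - 2*(j:ℝ)/L))
      - (bdDist L α 0 t 0 - bdDist L α 0 t L)
      = ∑ j ∈ ((Finset.range (L+1)).erase 0).erase L, bdDist L α 0 t j * (1 - 2*(j:ℝ)/L) := by
    rw [hsplit]; simp only [f0, fL]; ring
  rw [key]
  calc |∑ j ∈ ((Finset.range (L+1)).erase 0).erase L, bdDist L α 0 t j * (1 - 2*(j:ℝ)/L)|
      ≤ ∑ j ∈ ((Finset.range (L+1)).erase 0).erase L, |bdDist L α 0 t j * (1 - 2*(j:ℝ)/L)| :=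
        Finset.abs_sum_le_sum_abs _ _
    _ ≤ ∑ j ∈ ((Finset.range (L+1)).erase 0).erase L, bdDist L α 0 t j := by
        refine Finset.sum_le_sum fun j hj => ?_
        obtain ⟨hj0, hjL⟩ := mem_S L j hj
        have hp0 : 0 ≤ bdDist L α 0 t j := dist_nonneg' L α h0.le h1 0 t j
        rw [abs_mul, abs_of_nonneg hp0]
        have hf : |1 - 2*(j:ℝ)/L| ≤ 1 := by
          rw [abs_le]
          have hj1 : (j:ℝ) ≤ L := by exact_mod_cast hjL.le
          have hj2 : (0:ℝ) ≤ (j:ℝ) := by positivity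
          have hLpos : (0:ℝ) < L := by positivity
          have hle2 : 2*(j:ℝ)/L ≤ 2 := by
            rw [div_le_iff₀ hLpos]; nlinarith
          have hge0 : (0:ℝ) ≤ 2*(j:ℝ)/L := by positivity
          constructor <;> linarith
        nlinarith
    _ ≤ 2 * α * L := interior_sum_bound L hL α h0 h1 t

lemma M_zero (L : ℕ) (hL : 1 ≤ L) (α : ℝ) :
    ∑ j ∈ Finset.range (L+1), bdDist L α 0 0 j * (1 - 2*(j:ℝ)/L) = 1 := by
  simp only [bdDist]
  have key : ∀ j : ℕ, (if j = 0 then (1:ℝ) else 0) * (1 - 2*(j:ℝ)/L)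
      = if j = 0 then (1:ℝ) else 0 := by
    intro j; split_ifs with h <;> [skip; ring]
    subst h; norm_num
  rw [Finset.sum_congr rfl fun j _ => key j,
    Finset.sum_ite_eq' (Finset.range (L+1)) 0 (fun _ => (1:ℝ)), if_pos (by simp)]

lemma M_est (L : ℕ) (hL : 1 ≤ L) (α : ℝ) (h0 : 0 < α) (h1 : α ≤ 1)
    (hβ : 0 ≤ 1 - 2*α/L) :
    ∀ t, |(∑ j ∈ Finset.range (L+1), bdDist L α 0 t j * (1 - 2*(j:ℝ)/L))
        - (1 - 2*α/L)^t| ≤ 2 * α * L := by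
  have hL0 : (0:ℝ) < L := by positivity
  intro t
  induction t with
  | zero =>
    rw [M_zero L hL α]
    simp
    positivity
  | succ t ih =>
    obtain ⟨Mt, hMt⟩ : ∃ x, x = ∑ j ∈ Finset.range (L+1), bdDist L α 0 t j * (1 - 2*(j:ℝ)/L) :=
      ⟨_, rfl⟩
    obtain ⟨Mt1, hMt1⟩ : ∃ x, x = ∑ j ∈ Finset.range (L+1), bdDist L α 0 (t+1) j * (1 - 2*(j:ℝ)/L) :=
      ⟨_, rfl⟩
    obtain ⟨u, hu⟩ : ∃ x, x = bdDist L α 0 t 0 - bdDist L α 0 t L := ⟨_, rfl⟩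
    have hrec := M_rec L hL α t
    have hmu := M_minus_u L hL α h0 h1 t
    rw [← hMt, ← hMt1, ← hu] at hrec
    rw [← hMt, ← hu] at hmu
    rw [← hMt] at ih
    rw [← hMt1]
    have key : Mt1 - (1 - 2*α/L)^(t+1) =
        (1 - 2*α/L) * (Mt - (1 - 2*α/L)^t) + (2*α/L) * (Mt - u) := by
      rw [hrec, pow_succ]; ring
    rw [key]
    have b1 : |(1 - 2*α/L) * (Mt - (1 - 2*α/L)^t)| ≤ (1 - 2*α/L) * (2*α*L) := by
      rw [abs_mul, abs_of_nonneg hβ]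
      exact mul_le_mul_of_nonneg_left ih hβ
    have b2 : |(2*α/L) * (Mt - u)| ≤ (2*α/L) * (2*α*L) := by
      rw [abs_mul, abs_of_nonneg (by positivity : (0:ℝ) ≤ 2*α/L)]
      exact mul_le_mul_of_nonneg_left hmu (by positivity)
    have b3 : (1 - 2*α/L) * (2*α*L) + (2*α/L) * (2*α*L) = 2*α*L := by
      field_simp; ring
    calc |(1 - 2*α/L) * (Mt - (1 - 2*α/L)^t) + (2*α/L) * (Mt - u)|
        ≤ |(1 - 2*α/L) * (Mt - (1 - 2*α/L)^t)| + |(2*α/L) * (Mt - u)| := abs_add_le _ _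
      _ ≤ 2*α*L := by linarith


/-- Part (b), first claim, of the key lemma: there is a universal constant `c > 0` with
`P^t(0,0) = P^t(L,L) = 1/2 + (1/2)(1 − 2α/L)^t + O(Lα)`. -/
theorem bdDist_endpoint_asymptotics :
    ∃ c : ℝ, 0 < c ∧ ∀ L : ℕ, 1 ≤ L → ∀ α : ℝ, α ∈ Set.Ioc (0 : ℝ) 1 → ∀ t : ℕ,
      bdDist L α 0 t 0 = bdDist L α L t L ∧
      |bdDist L α 0 t 0 - 1 / 2 - (1 / 2) * (1 - 2 * α / L) ^ t| ≤ c * L * α := by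
  refine ⟨8, by norm_num, fun L hL α hα t => ?_⟩
  obtain ⟨h0, h1⟩ := hα
  have hLpos : (0:ℝ) < L := by positivity
  constructor
  · have := dist_symm L hL α t L le_rfl
    rw [Nat.sub_self] at this
    exact this.symm
  · by_cases hβ : 0 ≤ 1 - 2*α/(L:ℝ)
    · -- main case
      have hsum := dist_sum L hL α 0 (by omega) t
      have hsplit := split3 L hL (bdDist L α 0 t)
      have hsum2 : bdDist L α 0 t 0 + bdDist L α 0 t L
          + ∑ j ∈ ((Finset.range (L+1)).erase 0).erase L, bdDist L α 0 t j = 1 := by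
        rw [← hsplit]; exact hsum
      have hs_le := interior_sum_bound L hL α h0 h1 t
      have hs_nonneg : 0 ≤ ∑ j ∈ ((Finset.range (L+1)).erase 0).erase L, bdDist L α 0 t j :=
        Finset.sum_nonneg fun j _ => dist_nonneg' L α h0.le h1 0 t j
      have hmu := M_minus_u L hL α h0 h1 t
      have hme := M_est L hL α h0 h1 hβ t
      have htri : |(bdDist L α 0 t 0 - bdDist L α 0 t L) - (1 - 2*α/L)^t| ≤ 4*α*L := by
        calc |(bdDist L α 0 t 0 - bdDist L α 0 t L) - (1 - 2*α/L)^t|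
            ≤ |(bdDist L α 0 t 0 - bdDist L α 0 t L)
                - (∑ j ∈ Finset.range (L+1), bdDist L α 0 t j * (1 - 2*(j:ℝ)/L))|
              + |(∑ j ∈ Finset.range (L+1), bdDist L α 0 t j * (1 - 2*(j:ℝ)/L))
                - (1 - 2*α/L)^t| := abs_sub_le _ _ _
          _ ≤ 2*α*L + 2*α*L := by
              rw [abs_sub_comm]
              exact add_le_add hmu hme
          _ = 4*α*L := by ring
      obtain ⟨htri1, htri2⟩ := abs_le.mp htri
      rw [abs_le]
      constructor <;> nlinarith
    · -- trivial case : 2α/L > 1, so L·α > 1/2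
      push_neg at hβ
      have hLα : (1:ℝ)/2 < L * α := by
        have h2 : (L:ℝ) < 2*α := by
          have := (lt_div_iff₀ hLpos).mp (by linarith : (1:ℝ) < 2*α/L)
          linarith
        have hL1 : (1:ℝ) ≤ L := by exact_mod_cast hL
        nlinarith
      have hβ1 : |1 - 2*α/(L:ℝ)| ≤ 1 := by
        rw [abs_le]
        have hL1 : (1:ℝ) ≤ L := by exact_mod_cast hL
        have : 2*α/(L:ℝ) ≤ 2 := by
          rw [div_le_iff₀ hLpos]; nlinarith
        constructor <;> linarith
      have hpow : |(1 - 2*α/(L:ℝ))^t| ≤ 1 := by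
        rw [abs_pow]; exact pow_le_one₀ (abs_nonneg _) hβ1
      obtain ⟨hp1, hp2⟩ := abs_le.mp hpow
      have hd0 : 0 ≤ bdDist L α 0 t 0 := dist_nonneg' L α h0.le h1 0 t 0
      have hd1 : bdDist L α 0 t 0 ≤ 1 := dist_le_one L hL α h0.le h1 0 (by omega) t 0 (by omega)
      rw [abs_le]
      constructor <;> nlinarith
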